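/- Let ρ be a density operator on a finite-dimensional Hilbert space H_A with purification Ψ_{RA} (a pure state on H_R ⊗ H_A whose partial trace over R equals ρ). For any two POVMs M = {Λ_x}_{x∈𝒳} and M̃ = {Λ̃_x}_{x∈𝒳} on H_A, the trace distance between the classical–quantum post-measurement states satisfies ‖(id ⊗ M)(Ψ_{RA}) − (id ⊗ M̃)(Ψ_{RA})‖₁ = Σ_x ‖√ρ (Λ_x − Λ̃_x) √ρ‖₁, where (id ⊗ M)(Ψ_{RA}) := Σ_x |x⟩⟨x| ⊗ Tr_A{(I_R ⊗ Λ_x)Ψ_{RA}}. -/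

import Mathlib

open Matrix Kronecker BigOperators
open scoped ComplexOrder

/-- The positive semidefinite square root of a positive semidefinite matrix (as in the older Mathlib). -/
noncomputable def Matrix.PosSemidef.sqrt {n 𝕜 : Type*} [Fintype n] [DecidableEq n] [RCLike 𝕜]
    {A : Matrix n n 𝕜} (hA : A.PosSemidef) : Matrix n n 𝕜 :=
  hA.1.eigenvectorUnitary.1 * diagonal ((↑) ∘ (√·) ∘ hA.1.eigenvalues) *
  (star hA.1.eigenvectorUnitary : Matrix n n 𝕜)

noncomputable def traceNorm {n : Type*} [Fintype n] [DecidableEq n] (A : Matrix n n ℂ) : ℝ :=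
  ((Matrix.posSemidef_conjTranspose_mul_self A).sqrt).trace.re

noncomputable def opNorm {n : Type*} [Fintype n] [DecidableEq n] (A : Matrix n n ℂ) : ℝ :=
  ‖Matrix.toEuclideanCLM (𝕜 := ℂ) A‖

noncomputable def ptraceLeft {r a : Type*} [Fintype r] (M : Matrix (r × a) (r × a) ℂ) : Matrix a a ℂ :=
  Matrix.of fun i j => ∑ k, M (k, i) (k, j)

noncomputable def ptraceRight {r a : Type*} [Fintype a] (M : Matrix (r × a) (r × a) ℂ) : Matrix r r ℂ :=
  Matrix.of fun i j => ∑ k, M (i, k) (j, k)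

noncomputable def vN {n : Type*} [Fintype n] [DecidableEq n] (ρ : Matrix n n ℂ) : ℝ :=
  if h : ρ.IsHermitian then -∑ i, (h.eigenvalues i) * Real.logb 2 (h.eigenvalues i) else 0

/-- The classical–quantum post-measurement state Σ_x |x⟩⟨x| ⊗ Tr_A{(I_R ⊗ Λ_x)Ψ}. -/
noncomputable def cqState {r a X : Type*} [Fintype r] [DecidableEq r] [Fintype a] [DecidableEq X]
    (M : X → Matrix a a ℂ) (Ψ : Matrix (r × a) (r × a) ℂ) : Matrix (X × r) (X × r) ℂ :=
  Matrix.of fun p q =>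
    if p.1 = q.1 then ptraceRight (((1 : Matrix r r ℂ) ⊗ₖ M p.1) * Ψ) p.2 q.2 else 0

section SqrtPort
open scoped MatrixOrder

lemma Matrix.PosSemidef.sqrt_eq_csqrt {n : Type*} [Fintype n] [DecidableEq n]
    {A : Matrix n n ℂ} (hA : A.PosSemidef) : hA.sqrt = CFC.sqrt A := by
  rw [CFC.sqrt_eq_cfc, cfc_nnreal_eq_real _ A, hA.1.cfc_eq]
  simp only [IsHermitian.cfc, Matrix.PosSemidef.sqrt, Unitary.conjStarAlgAut_apply]
  congr 3
  funext i
  simp [Real.coe_toNNReal', max_eq_left (hA.eigenvalues_nonneg i)]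

lemma Matrix.PosSemidef.posSemidef_sqrt {n : Type*} [Fintype n] [DecidableEq n]
    {A : Matrix n n ℂ} (hA : A.PosSemidef) : hA.sqrt.PosSemidef := by
  rw [hA.sqrt_eq_csqrt]; exact (CFC.sqrt_nonneg A).posSemidef

lemma Matrix.PosSemidef.sqrt_mul_self {n : Type*} [Fintype n] [DecidableEq n]
    {A : Matrix n n ℂ} (hA : A.PosSemidef) : hA.sqrt * hA.sqrt = A := by
  rw [hA.sqrt_eq_csqrt]; exact CFC.sqrt_mul_sqrt_self A hA.nonneg

lemma Matrix.PosSemidef.sq_sqrt {n : Type*} [Fintype n] [DecidableEq n]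
    {A : Matrix n n ℂ} (hA : A.PosSemidef) : hA.sqrt ^ 2 = A := by
  rw [sq, hA.sqrt_mul_self]

lemma Matrix.PosSemidef.eq_sqrt_of_sq_eq {n : Type*} [Fintype n] [DecidableEq n]
    {A : Matrix n n ℂ} (hA : A.PosSemidef) (B : Matrix n n ℂ) (hB : B.PosSemidef)
    (h : A ^ 2 = B) : A = hB.sqrt := by
  rw [hB.sqrt_eq_csqrt, eq_comm, CFC.sqrt_eq_iff _ _ hB.nonneg hA.nonneg, ← sq, h]

end SqrtPort

section Helpers
open Polynomial


private lemma myConjPow {n : Type*} [Fintype n] [DecidableEq n]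
    (U D : Matrix n n ℂ) (h1 : U * star U = 1) (h2 : star U * U = 1) (k : ℕ) :
    (U * D * star U) ^ k = U * D ^ k * star U := by
  induction k with
  | zero => simp [h1]
  | succ k ih =>
    rw [pow_succ, ih, pow_succ]
    have : star U * (U * D * star U) = D * star U := by
      rw [← mul_assoc, ← mul_assoc, h2, one_mul]
    calc U * D ^ k * star U * (U * D * star U)
        = U * D ^ k * (star U * (U * D * star U)) := by rw [mul_assoc]
      _ = U * D ^ k * (D * star U) := by rw [this]
      _ = U * (D ^ k * D) * star U := by rw [mul_assoc, mul_assoc, mul_assoc]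

private lemma aeval_conj {n : Type*} [Fintype n] [DecidableEq n]
    (U D : Matrix n n ℂ) (h1 : U * star U = 1) (h2 : star U * U = 1) (p : ℂ[X]) :
    aeval (U * D * star U) p = U * aeval D p * star U := by
  induction p using Polynomial.induction_on' with
  | add p q hp hq => simp [hp, hq, Matrix.mul_add, Matrix.add_mul]
  | monomial k c =>
    rw [aeval_monomial, aeval_monomial, myConjPow U D h1 h2,
      Algebra.algebraMap_eq_smul_one, smul_mul_assoc, smul_mul_assoc, one_mul,
      mul_smul_comm, smul_mul_assoc, one_mul]

private lemma aeval_diagonal {n : Type*} [Fintype n] [DecidableEq n]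
    (d : n → ℂ) (p : ℂ[X]) :
    aeval (Matrix.diagonal d) p = Matrix.diagonal (fun i => p.eval (d i)) := by
  induction p using Polynomial.induction_on' with
  | add p q hp hq => simp [hp, hq, diagonal_add]
  | monomial k c =>
    simp [aeval_monomial, diagonal_pow, algebraMap, Algebra.algebraMap, eval_monomial]

private lemma aeval_eq_sqrt {n : Type*} [Fintype n] [DecidableEq n]
    {A : Matrix n n ℂ} (hA : A.PosSemidef) (p : ℂ[X])
    (hp : ∀ i, p.eval ((hA.1.eigenvalues i : ℝ) : ℂ) = ((Real.sqrt (hA.1.eigenvalues i) : ℝ) : ℂ)) :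
    aeval A p = hA.sqrt := by
  have h1 : (hA.1.eigenvectorUnitary : Matrix n n ℂ) * star (hA.1.eigenvectorUnitary : Matrix n n ℂ) = 1 :=
    (Matrix.mem_unitaryGroup_iff).mp (hA.1.eigenvectorUnitary).2
  have h2 : star (hA.1.eigenvectorUnitary : Matrix n n ℂ) * (hA.1.eigenvectorUnitary : Matrix n n ℂ) = 1 :=
    (Matrix.mem_unitaryGroup_iff').mp (hA.1.eigenvectorUnitary).2
  conv_lhs => rw [hA.1.spectral_theorem, Unitary.conjStarAlgAut_apply]
  rw [aeval_conj _ _ h1 h2, aeval_diagonal]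
  show _ = (hA.1.eigenvectorUnitary : Matrix n n ℂ) *
      diagonal ((↑) ∘ Real.sqrt ∘ hA.1.eigenvalues) * star (hA.1.eigenvectorUnitary : Matrix n n ℂ)
  exact congrArg (fun d => (hA.1.eigenvectorUnitary : Matrix n n ℂ) * diagonal d *
    star (hA.1.eigenvectorUnitary : Matrix n n ℂ)) (funext hp)

private lemma myPowMulComm {r a : Type*} [Fintype r] [Fintype a] [DecidableEq r] [DecidableEq a]
    (Y : Matrix r a ℂ) (k : ℕ) : (Y * Yᴴ) ^ k * Y = Y * (Yᴴ * Y) ^ k := by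
  induction k with
  | zero => simp
  | succ k ih =>
    rw [pow_succ, pow_succ]
    calc (Y * Yᴴ) ^ k * (Y * Yᴴ) * Y = (Y * Yᴴ) ^ k * Y * (Yᴴ * Y) := by
          rw [Matrix.mul_assoc, Matrix.mul_assoc, Matrix.mul_assoc]
      _ = Y * (Yᴴ * Y) ^ k * (Yᴴ * Y) := by rw [ih]
      _ = Y * ((Yᴴ * Y) ^ k * (Yᴴ * Y)) := by rw [Matrix.mul_assoc]

private lemma aeval_mul_comm' {r a : Type*} [Fintype r] [Fintype a] [DecidableEq r] [DecidableEq a]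
    (Y : Matrix r a ℂ) (p : ℂ[X]) :
    aeval (Y * Yᴴ) p * Y = Y * aeval (Yᴴ * Y) p := by
  induction p using Polynomial.induction_on' with
  | add p q hp hq => simp [hp, hq, Matrix.add_mul, Matrix.mul_add]
  | monomial k c =>
    rw [aeval_monomial, aeval_monomial, Algebra.algebraMap_eq_smul_one,
      Algebra.algebraMap_eq_smul_one, Matrix.smul_mul, Matrix.smul_mul, Matrix.smul_mul,
      Matrix.mul_smul, one_mul, one_mul, myPowMulComm]

private lemma trace_sqrt_comm {r a : Type*} [Fintype r] [DecidableEq r] [Fintype a] [DecidableEq a]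
    (Y : Matrix r a ℂ) :
    (Matrix.posSemidef_self_mul_conjTranspose Y).sqrt.trace
      = (Matrix.posSemidef_conjTranspose_mul_self Y).sqrt.trace := by
  set h1 := Matrix.posSemidef_self_mul_conjTranspose Y
  set h2 := Matrix.posSemidef_conjTranspose_mul_self Y
  set s : Finset ℂ :=
    (Finset.univ.image fun i => ((h1.1.eigenvalues i : ℝ) : ℂ)) ∪
    (Finset.univ.image fun i => ((h2.1.eigenvalues i : ℝ) : ℂ)) with hs
  set f : ℂ → ℂ := fun z => ((Real.sqrt z.re / z.re : ℝ) : ℂ) with hf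
  set g : ℂ[X] := Lagrange.interpolate s id f with hg
  have hgs : ∀ z ∈ s, g.eval z = f z := fun z hz =>
    Lagrange.eval_interpolate_at_node f (Set.injOn_id _) hz
  set p : ℂ[X] := Polynomial.X * g with hp
  have key : ∀ (l : ℝ), 0 ≤ l → (l : ℂ) ∈ s → p.eval (l : ℂ) = ((Real.sqrt l : ℝ) : ℂ) := by
    intro l hl hls
    rw [hp, eval_mul, eval_X, hgs _ hls, hf]
    simp only [Complex.ofReal_re]
    rcases eq_or_lt_of_le hl with h | h
    · simp [← h]
    · rw [← Complex.ofReal_mul]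
      congr 1
      field_simp
  have e1 : aeval (Y * Yᴴ) p = h1.sqrt :=
    aeval_eq_sqrt h1 p (fun i => key _ (h1.eigenvalues_nonneg i)
      (Finset.mem_union_left _ (Finset.mem_image_of_mem _ (Finset.mem_univ i))))
  have e2 : aeval (Yᴴ * Y) p = h2.sqrt :=
    aeval_eq_sqrt h2 p (fun i => key _ (h2.eigenvalues_nonneg i)
      (Finset.mem_union_right _ (Finset.mem_image_of_mem _ (Finset.mem_univ i))))
  have t1 : h1.sqrt = Y * Yᴴ * aeval (Y * Yᴴ) g := by rw [← e1, hp, _root_.map_mul, aeval_X]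
  have t2 : h2.sqrt = Yᴴ * Y * aeval (Yᴴ * Y) g := by rw [← e2, hp, _root_.map_mul, aeval_X]
  rw [t1, t2]
  calc (Y * Yᴴ * aeval (Y * Yᴴ) g).trace
      = (Y * (Yᴴ * aeval (Y * Yᴴ) g)).trace := by rw [Matrix.mul_assoc]
    _ = ((Yᴴ * aeval (Y * Yᴴ) g) * Y).trace := Matrix.trace_mul_comm _ _
    _ = (Yᴴ * (aeval (Y * Yᴴ) g * Y)).trace := by rw [Matrix.mul_assoc]
    _ = (Yᴴ * (Y * aeval (Yᴴ * Y) g)).trace := by rw [aeval_mul_comm']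
    _ = (Yᴴ * Y * aeval (Yᴴ * Y) g).trace := by rw [Matrix.mul_assoc]

private lemma sqrt_congr {n : Type*} [Fintype n] [DecidableEq n] {A B : Matrix n n ℂ}
    (h : A = B) (hA : A.PosSemidef) (hB : B.PosSemidef) : hA.sqrt = hB.sqrt := by
  subst h; rfl

private lemma traceNorm_sandwich {r a : Type*} [Fintype r] [DecidableEq r] [Fintype a]
    [DecidableEq a] (W : Matrix r a ℂ) (A ρ : Matrix a a ℂ) (hA : A.IsHermitian)
    (hρ : ρ.PosSemidef) (hW : Wᴴ * W = ρ) :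
    traceNorm (W * A * Wᴴ) = traceNorm (hρ.sqrt * A * hρ.sqrt) := by
  set S := hρ.sqrt with hSdef
  have hSh : Sᴴ = S := hρ.posSemidef_sqrt.1
  have hSS : S * S = ρ := hρ.sqrt_mul_self
  set Y := W * A * S with hY
  have fact1 : (W * A * Wᴴ)ᴴ * (W * A * Wᴴ) = Y * Yᴴ := by
    simp only [hY, conjTranspose_mul, conjTranspose_conjTranspose, hSh, hA.eq, Matrix.mul_assoc]
    rw [← Matrix.mul_assoc Wᴴ W (A * Wᴴ), hW, ← Matrix.mul_assoc S S (A * Wᴴ), hSS]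
  have fact2 : (S * A * S)ᴴ * (S * A * S) = Yᴴ * Y := by
    simp only [hY, conjTranspose_mul, conjTranspose_conjTranspose, hSh, hA.eq, Matrix.mul_assoc]
    rw [← Matrix.mul_assoc S S (A * S), hSS, ← Matrix.mul_assoc Wᴴ W (A * S), hW]
  unfold traceNorm
  rw [sqrt_congr fact1 _ (posSemidef_self_mul_conjTranspose Y), trace_sqrt_comm Y,
    sqrt_congr fact2 _ (posSemidef_conjTranspose_mul_self Y)]

private lemma traceNorm_transpose {n : Type*} [Fintype n] [DecidableEq n] (N : Matrix n n ℂ) :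
    traceNorm Nᵀ = traceNorm N := by
  have fact : (Nᵀ)ᴴ * Nᵀ = (N * Nᴴ)ᵀ := by
    ext i j
    simp only [mul_apply, conjTranspose_apply, transpose_apply]
    exact Finset.sum_congr rfl fun k _ => mul_comm _ _
  have pt : ((N * Nᴴ)ᵀ).PosSemidef := (posSemidef_self_mul_conjTranspose N).transpose
  have h2 : ((Matrix.posSemidef_self_mul_conjTranspose N).sqrt)ᵀ = pt.sqrt := by
    apply Matrix.PosSemidef.eq_sqrt_of_sq_eq
      ((Matrix.posSemidef_self_mul_conjTranspose N).posSemidef_sqrt.transpose)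
    rw [pow_two, ← transpose_mul, ← pow_two,
      (Matrix.posSemidef_self_mul_conjTranspose N).sq_sqrt]
  unfold traceNorm
  rw [sqrt_congr fact _ pt, ← h2, Matrix.trace_transpose, trace_sqrt_comm N]

private lemma posSemidef_blockDiagonal {o n : Type*} [Fintype o] [DecidableEq o] [Fintype n]
    [DecidableEq n] {Q : o → Matrix n n ℂ} (hQ : ∀ x, (Q x).PosSemidef) :
    (blockDiagonal Q).PosSemidef := by
  rw [posSemidef_iff_dotProduct_mulVec]
  constructor
  · rw [Matrix.IsHermitian, blockDiagonal_conjTranspose]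
    exact congrArg _ (funext fun x => (hQ x).1)
  · intro v
    have key : star v ⬝ᵥ (blockDiagonal Q) *ᵥ v
        = ∑ x, star (fun i => v (i, x)) ⬝ᵥ (Q x) *ᵥ (fun i => v (i, x)) := by
      simp only [dotProduct, mulVec, Pi.star_apply, blockDiagonal_apply,
        Fintype.sum_prod_type, ite_mul, zero_mul]
      rw [Finset.sum_comm]
      refine Finset.sum_congr rfl fun x _ => Finset.sum_congr rfl fun i _ => ?_
      congr 1
      rw [Finset.sum_comm]
      simp [Finset.sum_ite_eq]
    rw [key]
    exact Finset.sum_nonneg fun x _ => (hQ x).dotProduct_mulVec_nonneg _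

private lemma traceNorm_blockDiagonal {o n : Type*} [Fintype o] [DecidableEq o] [Fintype n]
    [DecidableEq n] (B : o → Matrix n n ℂ) :
    traceNorm (blockDiagonal B) = ∑ x, traceNorm (B x) := by
  have fact : (blockDiagonal B)ᴴ * blockDiagonal B
      = blockDiagonal (fun x => (B x)ᴴ * B x) := by
    rw [blockDiagonal_conjTranspose, blockDiagonal_mul]
  have hpsd : (blockDiagonal fun x => (B x)ᴴ * B x).PosSemidef :=
    posSemidef_blockDiagonal fun x => posSemidef_conjTranspose_mul_self (B x)
  have hsq : blockDiagonal (fun x => (Matrix.posSemidef_conjTranspose_mul_self (B x)).sqrt)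
      = hpsd.sqrt := by
    apply Matrix.PosSemidef.eq_sqrt_of_sq_eq
      (posSemidef_blockDiagonal fun x =>
        (Matrix.posSemidef_conjTranspose_mul_self (B x)).posSemidef_sqrt)
    rw [pow_two, ← blockDiagonal_mul]
    exact congrArg _ (funext fun x =>
      (Matrix.posSemidef_conjTranspose_mul_self (B x)).sqrt_mul_self)
  unfold traceNorm
  rw [sqrt_congr fact _ hpsd, ← hsq, Matrix.trace_blockDiagonal]
  exact Complex.re_sum _ _

private lemma traceNorm_submatrix {m n : Type*} [Fintype m] [DecidableEq m] [Fintype n]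
    [DecidableEq n] (M : Matrix n n ℂ) (e : m ≃ n) :
    traceNorm (M.submatrix e e) = traceNorm M := by
  have fact : (M.submatrix e e)ᴴ * (M.submatrix e e) = (Mᴴ * M).submatrix e e := by
    rw [conjTranspose_submatrix, submatrix_mul_equiv]
  have hpsd : ((Mᴴ * M).submatrix e e).PosSemidef :=
    (Matrix.posSemidef_conjTranspose_mul_self M).submatrix e
  have hsq : ((Matrix.posSemidef_conjTranspose_mul_self M).sqrt).submatrix (⇑e) (⇑e)
      = hpsd.sqrt := by
    apply Matrix.PosSemidef.eq_sqrt_of_sq_eq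
      ((Matrix.posSemidef_conjTranspose_mul_self M).posSemidef_sqrt.submatrix e)
    rw [pow_two, submatrix_mul_equiv, ← pow_two,
      (Matrix.posSemidef_conjTranspose_mul_self M).sq_sqrt]
  have htr : ∀ (S : Matrix n n ℂ), (S.submatrix e e).trace = S.trace := by
    intro S
    simp only [Matrix.trace, Matrix.diag, submatrix_apply]
    exact Equiv.sum_comp e (fun j => S j j)
  unfold traceNorm
  rw [sqrt_congr fact _ hpsd, ← hsq, htr]

end Helpers

/-- Equivalence of faithful-simulation criteria (Lemma 1 of the paper):
‖(id ⊗ M)(Ψ) − (id ⊗ M̃)(Ψ)‖₁ = Σ_x ‖√ρ(Λ_x − Λ̃_x)√ρ‖₁ for any purification Ψ of ρ. -/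
theorem cq_trace_dist_eq_sum_traceNorm {r a X : Type*}
    [Fintype r] [DecidableEq r] [Fintype a] [DecidableEq a] [Fintype X] [DecidableEq X]
    (ρ : Matrix a a ℂ) (hρ : ρ.PosSemidef)
    (ψ : r × a → ℂ) (hψ : ∑ p, Complex.normSq (ψ p) = 1)
    (Ψ : Matrix (r × a) (r × a) ℂ)
    (hΨ : Ψ = Matrix.of fun p q => ψ p * star (ψ q))
    (hpur : ptraceLeft Ψ = ρ)
    (M M' : X → Matrix a a ℂ)
    (hM : ∀ x, (M x).PosSemidef) (hM' : ∀ x, (M' x).PosSemidef)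
    (hMsum : ∑ x, M x = 1) (hM'sum : ∑ x, M' x = 1) :
    traceNorm (cqState M Ψ - cqState M' Ψ)
      = ∑ x, traceNorm (hρ.sqrt * (M x - M' x) * hρ.sqrt) := by
  classical
  set W : Matrix r a ℂ := Matrix.of (fun (i : r) (k : a) => star (ψ (i, k))) with hWdef
  have hWW : Wᴴ * W = ρ := by
    ext k l
    rw [← hpur]
    simp only [mul_apply, conjTranspose_apply, hWdef, Matrix.of_apply, ptraceLeft, hΨ,
      star_star]
  have key : ∀ (A : Matrix a a ℂ),
      ptraceRight (((1 : Matrix r r ℂ) ⊗ₖ A) * Ψ) = (W * A * Wᴴ)ᵀ := by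
    intro A
    ext i j
    have inner : ∀ k, (((1 : Matrix r r ℂ) ⊗ₖ A) * Ψ) (i, k) (j, k)
        = ∑ l, A k l * (ψ (i, l) * star (ψ (j, k))) := by
      intro k
      rw [mul_apply, Fintype.sum_prod_type]
      have h0 : ∀ u : r, u ∈ Finset.univ → u ≠ i →
          (∑ l, (((1 : Matrix r r ℂ) ⊗ₖ A) (i, k) (u, l)) * Ψ (u, l) (j, k)) = 0 := by
        intro u _ hu
        apply Finset.sum_eq_zero
        intro l _
        have : (1 : Matrix r r ℂ) i u = 0 := one_apply_ne (Ne.symm hu)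
        simp [kroneckerMap_apply, this]
      rw [Finset.sum_eq_single i h0 (fun h => absurd (Finset.mem_univ i) h)]
      refine Finset.sum_congr rfl fun l _ => ?_
      simp [kroneckerMap_apply, one_apply, hΨ]
    show (∑ k, (((1 : Matrix r r ℂ) ⊗ₖ A) * Ψ) (i, k) (j, k)) = (W * A * Wᴴ) j i
    calc (∑ k, (((1 : Matrix r r ℂ) ⊗ₖ A) * Ψ) (i, k) (j, k))
        = ∑ k, ∑ l, A k l * (ψ (i, l) * star (ψ (j, k))) :=
          Finset.sum_congr rfl fun k _ => inner k
      _ = (W * A * Wᴴ) j i := by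
          rw [Finset.sum_comm]
          simp only [mul_apply, conjTranspose_apply, hWdef, Matrix.of_apply, star_star]
          refine Finset.sum_congr rfl fun l _ => ?_
          rw [Finset.sum_mul]
          refine Finset.sum_congr rfl fun k _ => ?_
          ring
  set Bx : X → Matrix r r ℂ := fun x => (W * (M x - M' x) * Wᴴ)ᵀ with hBx
  have hxy : ∀ x, ptraceRight (((1 : Matrix r r ℂ) ⊗ₖ M x) * Ψ)
      - ptraceRight (((1 : Matrix r r ℂ) ⊗ₖ M' x) * Ψ) = Bx x := by
    intro x
    rw [key (M x), key (M' x), hBx, ← transpose_sub, ← Matrix.sub_mul, ← Matrix.mul_sub]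
  have hdiff : cqState M Ψ - cqState M' Ψ
      = (blockDiagonal Bx).submatrix (Equiv.prodComm X r) (Equiv.prodComm X r) := by
    ext ⟨x, i⟩ ⟨y, j⟩
    simp only [Matrix.sub_apply, cqState, Matrix.of_apply, submatrix_apply,
      Equiv.prodComm_apply, Prod.swap_prod_mk, blockDiagonal_apply]
    by_cases h : x = y
    · subst h
      simp only [if_pos rfl, if_true, eq_self_iff_true]
      rw [← Matrix.sub_apply, hxy x]
    · simp [h]
  rw [hdiff, traceNorm_submatrix, traceNorm_blockDiagonal]
  refine Finset.sum_congr rfl fun x _ => ?_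
  rw [hBx, traceNorm_transpose]
  exact traceNorm_sandwich W (M x - M' x) ρ ((hM x).1.sub (hM' x).1) hρ hWW
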